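/- Let B be a finite set of primes with m = |B|, and let T₁ be a real number such that for every p ∈ B and every integer n, |T₁ − 2πn/log p| ≥ 2π/u, where u ≥ max B. Then |ζ_B(iT₁)| = ∏_{p∈B} 1/|2 sin(T₁ log p / 2)| ≤ (πu/4)^m · ∏_{p∈B} 1/log p. -/

import Mathlib

open Complex Real

lemma abs_one_sub_exp_mul_I (θ : ℝ) :
    ‖1 - Complex.exp (θ * I)‖ = 2 * |Real.sin (θ / 2)| := by
  rw [Complex.norm_def, Complex.normSq_apply]
  have hre : (1 - Complex.exp (θ * I)).re = 1 - Real.cos θ := by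
    simp [Complex.exp_ofReal_mul_I_re]
  have him : (1 - Complex.exp (θ * I)).im = -Real.sin θ := by
    simp [Complex.exp_ofReal_mul_I_im]
  rw [hre, him]
  have hs : Real.sin (θ / 2) ^ 2 = (1 - Real.cos θ) / 2 := by
    have hc : Real.cos θ = 2 * Real.cos (θ / 2) ^ 2 - 1 := by
      rw [show θ = 2 * (θ / 2) by ring, Real.cos_two_mul]
      ring_nf
    have hpyth := Real.sin_sq_add_cos_sq (θ / 2)
    nlinarith
  have : (1 - Real.cos θ) * (1 - Real.cos θ) + -Real.sin θ * -Real.sin θ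
      = (2 * |Real.sin (θ / 2)|) ^ 2 := by
    have hpyth := Real.sin_sq_add_cos_sq θ
    have habs : |Real.sin (θ / 2)| ^ 2 = Real.sin (θ / 2) ^ 2 := sq_abs _
    nlinarith
  rw [this, Real.sqrt_sq (by positivity)]

lemma factor_abs (p : ℕ) (hp : p.Prime) (T₁ : ℝ) :
    ‖1 - (p : ℂ) ^ (-(T₁ * I))‖ = 2 * |Real.sin (T₁ * Real.log p / 2)| := by
  have hp0 : (p : ℂ) ≠ 0 := Nat.cast_ne_zero.mpr hp.pos.ne'
  have hlog : Complex.log (p : ℂ) = (Real.log p : ℂ) := by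
    rw [← Complex.ofReal_natCast, Complex.ofReal_log (Nat.cast_nonneg p)]
  rw [Complex.cpow_def_of_ne_zero hp0, hlog]
  have : (Real.log p : ℂ) * -(↑T₁ * I) = ((-(T₁ * Real.log p) : ℝ) : ℂ) * I := by
    push_cast; ring
  rw [this, abs_one_sub_exp_mul_I]
  rw [show -(T₁ * Real.log p) / 2 = -(T₁ * Real.log p / 2) by ring, Real.sin_neg, abs_neg]

theorem euler_prod_on_imag_axis (B : Finset ℕ) (hB : ∀ p ∈ B, p.Prime)
    (u T₁ : ℝ) (hu : ∀ p ∈ B, (p : ℝ) ≤ u)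
    (hT : ∀ p ∈ B, ∀ n : ℤ, |T₁ - 2 * π * n / Real.log p| ≥ 2 * π / u) :
    ‖∏ p ∈ B, (1 - (p : ℂ) ^ (-(T₁ * I)))⁻¹‖ =
      ∏ p ∈ B, 1 / |2 * Real.sin (T₁ * Real.log p / 2)| ∧
    ∏ p ∈ B, 1 / |2 * Real.sin (T₁ * Real.log p / 2)| ≤
      (π * u / 4) ^ B.card * ∏ p ∈ B, 1 / Real.log p := by
  constructor
  · rw [norm_prod]
    refine Finset.prod_congr rfl fun p hp => ?_
    rw [norm_inv, factor_abs p (hB p hp) T₁, one_div, abs_mul, _root_.abs_two]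
  · have key : ∀ p ∈ B, 1 / |2 * Real.sin (T₁ * Real.log p / 2)| ≤ π * u / 4 * (1 / Real.log p) := by
      intro p hp
      have hp' := hB p hp
      have hp2 : (2 : ℝ) ≤ p := by exact_mod_cast hp'.two_le
      have hu2 : (2 : ℝ) ≤ u := le_trans hp2 (hu p hp)
      have hL : 0 < Real.log p := Real.log_pos (by linarith)
      set x := T₁ * Real.log p / 2 with hx
      set n := round (x / π) with hn
      have hpi := Real.pi_pos
      -- distance bound from hT
      have h1 : π * Real.log p / u ≤ |x - n * π| := by
        have := hT p hp n
        have heq : |x - n * π| = |T₁ - 2 * π * n / Real.log p| * (Real.log p / 2) := by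
          have e1 : (T₁ - 2 * π * n / Real.log p) * (Real.log p / 2) = x - n * π := by
            field_simp [hx]
            ring
          rw [← e1, abs_mul, abs_of_pos (show (0:ℝ) < Real.log p / 2 by linarith)]
        rw [heq]
        have h2 : 2 * π / u * (Real.log p / 2) ≤ |T₁ - 2 * π * ↑n / Real.log p| * (Real.log p / 2) := by
          apply mul_le_mul_of_nonneg_right this (by linarith)
        calc π * Real.log p / u = 2 * π / u * (Real.log p / 2) := by
              field_simp
          _ ≤ _ := h2
      -- nearness bound from round
      have h2 : |x - n * π| ≤ π / 2 := by
        have := abs_sub_round (x / π)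
        have heq : |x - n * π| = |x / π - n| * π := by
          have e1 : (x / π - n) * π = x - n * π := by
            field_simp
          rw [← e1, abs_mul, abs_of_pos hpi]
        rw [heq]
        calc |x / π - ↑n| * π ≤ 1 / 2 * π := by
              apply mul_le_mul_of_nonneg_right this (le_of_lt hpi)
          _ = π / 2 := by ring
      -- |sin x| = |sin (x - nπ)|
      have hsin_eq : |Real.sin x| = |Real.sin (x - n * π)| := by
        have : Real.sin ((x - n * π) + n * π) = (-1) ^ n * Real.sin (x - n * π) :=
          Real.sin_add_int_mul_pi _ n
        rw [sub_add_cancel] at this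
        rw [this, abs_mul]
        rcases Int.even_or_odd n with he | ho
        · rw [he.neg_one_zpow]; simp
        · rw [ho.neg_one_zpow]; simp
      -- sin lower bound
      have hsin_lb : 2 / π * |x - n * π| ≤ |Real.sin (x - n * π)| := by
        set y := x - n * π
        have h3 : 2 / π * |y| ≤ Real.sin |y| := Real.mul_le_sin (abs_nonneg y) (by simpa using h2)
        refine h3.trans ?_
        rcases abs_choice y with h | h
        · rw [h]; exact le_abs_self _
        · rw [h, Real.sin_neg]
          exact neg_le_abs _
      have hsin : 2 * Real.log p / u ≤ |Real.sin x| := by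
        rw [hsin_eq]
        calc 2 * Real.log p / u = 2 / π * (π * Real.log p / u) := by
              field_simp
          _ ≤ 2 / π * |x - n * π| := by
              apply mul_le_mul_of_nonneg_left h1 (by positivity)
          _ ≤ _ := hsin_lb
      have hupos : 0 < u := by linarith
      have hden : 0 < 2 * Real.log p / u := by positivity
      have habs : 4 * Real.log p / u ≤ |2 * Real.sin x| := by
        rw [abs_mul, _root_.abs_two]
        calc 4 * Real.log p / u = 2 * (2 * Real.log p / u) := by ring
          _ ≤ 2 * |Real.sin x| := by linarith
      have hpos : 0 < |2 * Real.sin x| := lt_of_lt_of_le (by positivity) habs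
      rw [div_le_iff₀ hpos, one_div, mul_comm (π * u / 4)]
      calc (1:ℝ) = Real.log p * (4 * Real.log p / u) * (u / (4 * Real.log p ^ 2)) := by
            field_simp
        _ ≤ Real.log p * |2 * Real.sin x| * (u / (4 * Real.log p ^ 2)) := by
            apply mul_le_mul_of_nonneg_right (mul_le_mul_of_nonneg_left habs hL.le) (by positivity)
        _ = (Real.log p)⁻¹ * (u / 4) * |2 * Real.sin x| := by
            field_simp
        _ ≤ (Real.log p)⁻¹ * (π * u / 4) * |2 * Real.sin x| := by
            have : u / 4 ≤ π * u / 4 := by nlinarith [Real.pi_gt_three]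
            apply mul_le_mul_of_nonneg_right (mul_le_mul_of_nonneg_left this (by positivity)) hpos.le
    calc ∏ p ∈ B, 1 / |2 * Real.sin (T₁ * Real.log p / 2)|
        ≤ ∏ p ∈ B, π * u / 4 * (1 / Real.log p) := by
          apply Finset.prod_le_prod (fun p _ => by positivity) key
      _ = (π * u / 4) ^ B.card * ∏ p ∈ B, 1 / Real.log p := by
          rw [Finset.prod_mul_distrib, Finset.prod_const]
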